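/- For every ζ = (ν,σ,η,ξ) ∈ ℝ⁴ satisfying the nonlinear drift condition b^C(ζ) = 0 and ξ ≥ 0, one has the lower bound H₁(ζ) ≥ −(ψ/2)·v^⊤ζ̃ − ½·|λ|·‖M‖_F·‖ζ − ζ⁰(Σ)‖². -/

import Mathlib

open Finset

noncomputable section

namespace Stmt13

/-- The Euclidean norm of a vector in `ℝ^m`. -/
def enorm {m : ℕ} (z : Fin m → ℝ) : ℝ := Real.sqrt (∑ i, z i ^ 2)

/-- The reference control `ζ⁰(Σ) = (0, Σ, 0, 0)`. -/
def zeta0 (Sig : ℝ) : Fin 4 → ℝ := ![0, Sig, 0, 0]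

/-- The fourth standard basis vector `e₄` of `ℝ⁴`. -/
def e4 : Fin 4 → ℝ := fun i => if i = 3 then 1 else 0

/-- `c^⊤ Ψ v` for the diagonal matrix `Ψ = diag psi`. -/
def cPv (psi c v : Fin 4 → ℝ) : ℝ := ∑ i, c i * psi i * v i

/-- `c^⊤ Ψ c` for the diagonal matrix `Ψ = diag psi`. -/
def cPc (psi c : Fin 4 → ℝ) : ℝ := ∑ i, c i * psi i * c i

/-- The Lagrange multiplier `λ`. -/
def lam (psi c v : Fin 4 → ℝ) : ℝ :=
  if 0 ≤ v 3 - cPv psi c v / cPc psi c * c 3 then cPv psi c v / cPc psi c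
  else (cPv psi c v - c 3 * v 3 * psi 3) / (cPc psi c - c 3 ^ 2 * psi 3)

/-- The Lagrange multiplier `μ = max (-(v₄ - λ c₄)) 0`. -/
def mu (psi c v : Fin 4 → ℝ) : ℝ := max (-(v 3 - lam psi c v * c 3)) 0

/-- `ζ̃ = Ψ (v - λ c + μ e₄)`. -/
def zetaTilde (psi c v : Fin 4 → ℝ) : Fin 4 → ℝ := fun i =>
  psi i * (v i - lam psi c v * c i + mu psi c v * e4 i)

/-- `H₁(ζ) = (1/(2ψ)) (ζ - ζ⁰(Σ))^⊤ Ψ⁻¹ (ζ - ζ⁰(Σ)) - v^⊤ (ζ - ζ⁰(Σ))`. -/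
def H1 (Sig ψ : ℝ) (psi v : Fin 4 → ℝ) (z : Fin 4 → ℝ) : ℝ :=
  (1 / (2 * ψ)) * ∑ i, (z i - zeta0 Sig i) ^ 2 / psi i -
    ∑ i, v i * (z i - zeta0 Sig i)

/-- The drift function
`b^C(ζ) = ν c₁ + (c₂/(2Σ))(σ² - Σ²) + (c₃/Σ) σ η + (η² + ξ) c₄` for `ζ = (ν,σ,η,ξ)`. -/
def bC (Sig : ℝ) (c z : Fin 4 → ℝ) : ℝ :=
  z 0 * c 0 + c 1 / (2 * Sig) * (z 1 ^ 2 - Sig ^ 2) + c 2 / Sig * (z 1 * z 2) +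
    (z 2 ^ 2 + z 3) * c 3

/-- The Frobenius norm of the symmetric 2×2 matrix `M` with entries
`M₁₁ = c₂/Σ`, `M₁₂ = M₂₁ = c₃/Σ`, `M₂₂ = 2 c₄`. -/
def frobM (Sig : ℝ) (c : Fin 4 → ℝ) : ℝ :=
  Real.sqrt ((c 1 / Sig) ^ 2 + (c 2 / Sig) ^ 2 + (c 2 / Sig) ^ 2 + (2 * c 3) ^ 2)


lemma coord (ψ p x b : ℝ) (hψ : 0 < ψ) (hp : 0 < p) :
    -(ψ/2) * (p * b^2) ≤ 1/(2*ψ) * (x^2/p) - b*x := by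
  have key : 1/(2*ψ) * (x^2/p) - b*x + (ψ/2)*(p*b^2) = (x - ψ*p*b)^2 / (2*ψ*p) := by
    field_simp; ring
  nlinarith [div_nonneg (sq_nonneg (x - ψ*p*b)) (by positivity : (0:ℝ) ≤ 2*ψ*p)]

lemma cs (a b d x y l : ℝ) :
    -(|l| * Real.sqrt (a^2+b^2+b^2+d^2) * (x^2+y^2)) ≤ l * (a*x^2 + 2*b*(x*y) + d*y^2) := by
  have hS : (0:ℝ) ≤ a^2+b^2+b^2+d^2 := by positivity
  have h1 : (a*x^2 + 2*b*(x*y) + d*y^2)^2 ≤ (a^2+b^2+b^2+d^2) * ((x^2+y^2))^2 := by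
    nlinarith [sq_nonneg (a*(x*y) - b*x^2), sq_nonneg (a*y^2 - d*x^2), sq_nonneg (b*y^2 - d*(x*y))]
  have h2 : |a*x^2 + 2*b*(x*y) + d*y^2| ≤ Real.sqrt (a^2+b^2+b^2+d^2) * (x^2+y^2) := by
    have h3 := Real.sqrt_le_sqrt h1
    rwa [Real.sqrt_sq_eq_abs, Real.sqrt_mul hS, Real.sqrt_sq (by positivity)] at h3
  calc -(|l| * Real.sqrt (a^2+b^2+b^2+d^2) * (x^2+y^2)) ≤ -(|l| * |a*x^2 + 2*b*(x*y) + d*y^2|) := by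
        nlinarith [abs_nonneg l]
    _ = -|l * (a*x^2 + 2*b*(x*y) + d*y^2)| := by rw [abs_mul]
    _ ≤ _ := neg_abs_le _

lemma cPc_sub_pos (psi c : Fin 4 → ℝ) (hpsi : ∀ i, 0 < psi i) (hc : c 0 ≠ 0) :
    0 < cPc psi c - c 3 ^ 2 * psi 3 := by
  have hc0 : 0 < c 0 ^ 2 := by positivity
  simp only [cPc, Fin.sum_univ_four]
  nlinarith [hpsi 0, hpsi 1, hpsi 2, hpsi 3, sq_nonneg (c 1), sq_nonneg (c 2),
    mul_pos hc0 (hpsi 0), mul_nonneg (sq_nonneg (c 1)) (hpsi 1).le,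
    mul_nonneg (sq_nonneg (c 2)) (hpsi 2).le]

lemma cPc_pos (psi c : Fin 4 → ℝ) (hpsi : ∀ i, 0 < psi i) (hc : c 0 ≠ 0) :
    0 < cPc psi c := by
  have h := cPc_sub_pos psi c hpsi hc
  nlinarith [mul_nonneg (sq_nonneg (c 3)) (hpsi 3).le]

lemma kkt (psi c v : Fin 4 → ℝ) (hpsi : ∀ i, 0 < psi i) (hc : c 0 ≠ 0) :
    cPv psi c v - lam psi c v * cPc psi c + mu psi c v * (c 3 * psi 3) = 0 ∧
      mu psi c v * (v 3 - lam psi c v * c 3 + mu psi c v) = 0 := by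
  have hP := cPc_pos psi c hpsi hc
  have hD := cPc_sub_pos psi c hpsi hc
  by_cases h : 0 ≤ v 3 - cPv psi c v / cPc psi c * c 3
  · have hl : lam psi c v = cPv psi c v / cPc psi c := by rw [lam, if_pos h]
    have hm : mu psi c v = 0 := by
      rw [mu, hl]; exact max_eq_right (by linarith)
    rw [hl, hm]
    constructor
    · field_simp
      ring
    · ring
  · have hl : lam psi c v = (cPv psi c v - c 3 * v 3 * psi 3) / (cPc psi c - c 3 ^ 2 * psi 3) := by
      rw [lam, if_neg h]
    push_neg at h
    have h2 : v 3 < cPv psi c v / cPc psi c * c 3 := by linarith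
    rw [div_mul_eq_mul_div, lt_div_iff₀ hP] at h2
    have ht : v 3 - lam psi c v * c 3 < 0 := by
      have he : (v 3 - lam psi c v * c 3) * (cPc psi c - c 3 ^ 2 * psi 3)
          = v 3 * cPc psi c - cPv psi c v * c 3 := by
        rw [hl]; field_simp; ring
      nlinarith
    have hm : mu psi c v = -(v 3 - lam psi c v * c 3) :=
      max_eq_left (by linarith)
    constructor
    · rw [hm, hl]; field_simp; ring
    · rw [hm]; ring

/-- For every `ζ` satisfying the nonlinear drift condition `b^C(ζ) = 0` and `ξ ≥ 0`:
`H₁(ζ) ≥ -(ψ/2) v^⊤ ζ̃ - ½ |λ| ‖M‖_F ‖ζ - ζ⁰(Σ)‖²`. -/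
theorem H1_lower_bound_on_drift_condition
    (Sig : ℝ) (hSig : 0 < Sig) (psi c v : Fin 4 → ℝ)
    (hpsi : ∀ i, 0 < psi i) (hc : c 0 ≠ 0)
    (ψ : ℝ) (hψ : 0 < ψ) :
    ∀ z : Fin 4 → ℝ, bC Sig c z = 0 → 0 ≤ z 3 →
      -(ψ / 2) * (∑ i, v i * zetaTilde psi c v i) -
          (1 / 2) * |lam psi c v| * frobM Sig c *
            enorm (fun i => z i - zeta0 Sig i) ^ 2 ≤
        H1 Sig ψ psi v z := by
  intro z hb hz3
  obtain ⟨hctz, hcomp⟩ := kkt psi c v hpsi hc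
  set L := lam psi c v with hLdef
  set m := mu psi c v with hmdef
  have hm0 : 0 ≤ m := le_max_right _ _
  simp only [cPv, cPc, Fin.sum_univ_four] at hctz
  -- squared norm
  have hz02 : (![0, Sig, 0, 0] : Fin 4 → ℝ) 2 = 0 := rfl
  have hz03 : (![0, Sig, 0, 0] : Fin 4 → ℝ) 3 = 0 := rfl
  have hN : enorm (fun i => z i - zeta0 Sig i) ^ 2
      = z 0 ^ 2 + (z 1 - Sig) ^ 2 + z 2 ^ 2 + z 3 ^ 2 := by
    simp only [enorm, zeta0, Fin.sum_univ_four, hz02, hz03]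
    rw [Real.sq_sqrt (by positivity)]
    norm_num
  rw [hN]
  -- drift rearrangement
  have hS : Sig ≠ 0 := hSig.ne'
  have hIdent : bC Sig c z = (c 0 * z 0 + c 1 * (z 1 - Sig) + c 2 * z 2 + c 3 * z 3)
      + (1/2) * (c 1 / Sig * (z 1 - Sig)^2 + 2 * (c 2 / Sig) * ((z 1 - Sig) * z 2)
        + 2 * c 3 * z 2 ^ 2) := by
    simp only [bC]; field_simp; ring
  have hdrift : c 0 * z 0 + c 1 * (z 1 - Sig) + c 2 * z 2 + c 3 * z 3
      = -(1/2) * (c 1 / Sig * (z 1 - Sig)^2 + 2 * (c 2 / Sig) * ((z 1 - Sig) * z 2)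
        + 2 * c 3 * z 2 ^ 2) := by
    rw [hIdent] at hb; linarith
  have hLd : L * (c 0 * z 0 + c 1 * (z 1 - Sig) + c 2 * z 2 + c 3 * z 3)
      = L * (-(1/2) * (c 1 / Sig * (z 1 - Sig)^2 + 2 * (c 2 / Sig) * ((z 1 - Sig) * z 2)
        + 2 * c 3 * z 2 ^ 2)) := by rw [hdrift]
  -- Cauchy-Schwarz
  have hcs := cs (c 1 / Sig) (c 2 / Sig) (2 * c 3) (z 1 - Sig) (z 2) L
  have hfr : frobM Sig c
      = Real.sqrt ((c 1 / Sig)^2 + (c 2 / Sig)^2 + (c 2 / Sig)^2 + (2 * c 3)^2) := rfl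
  rw [← hfr] at hcs
  -- coordinate bounds
  have h0 := coord ψ (psi 0) (z 0) (v 0 - L * c 0) hψ (hpsi 0)
  have h1 := coord ψ (psi 1) (z 1 - Sig) (v 1 - L * c 1) hψ (hpsi 1)
  have h2 := coord ψ (psi 2) (z 2) (v 2 - L * c 2) hψ (hpsi 2)
  have h3 := coord ψ (psi 3) (z 3) (v 3 - L * c 3 + m) hψ (hpsi 3)
  have hmz : 0 ≤ m * z 3 := mul_nonneg hm0 hz3
  have hrest : 0 ≤ |L| * frobM Sig c * (z 0 ^ 2 + z 3 ^ 2) := by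
    have : 0 ≤ frobM Sig c := Real.sqrt_nonneg _
    positivity
  -- relate sum of squares to v·ζ̃
  have heq : (ψ/2) * (psi 0 * (v 0 - L * c 0)^2 + psi 1 * (v 1 - L * c 1)^2
      + psi 2 * (v 2 - L * c 2)^2 + psi 3 * (v 3 - L * c 3 + m)^2)
      = (ψ/2) * (v 0 * (psi 0 * (v 0 - L * c 0)) + v 1 * (psi 1 * (v 1 - L * c 1))
      + v 2 * (psi 2 * (v 2 - L * c 2)) + v 3 * (psi 3 * (v 3 - L * c 3 + m))) := by
    have : psi 0 * (v 0 - L * c 0)^2 + psi 1 * (v 1 - L * c 1)^2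
      + psi 2 * (v 2 - L * c 2)^2 + psi 3 * (v 3 - L * c 3 + m)^2
      = v 0 * (psi 0 * (v 0 - L * c 0)) + v 1 * (psi 1 * (v 1 - L * c 1))
      + v 2 * (psi 2 * (v 2 - L * c 2)) + v 3 * (psi 3 * (v 3 - L * c 3 + m)) := by
      linear_combination (-L) * hctz + psi 3 * hcomp
    rw [this]
  -- expand goal
  have he0 : e4 0 = 0 := rfl
  have he1 : e4 1 = 0 := rfl
  have he2 : e4 2 = 0 := rfl
  have he3 : e4 3 = 1 := rfl
  simp only [H1, zetaTilde, zeta0, Fin.sum_univ_four, Matrix.cons_val_zero,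
    Matrix.cons_val_one, Matrix.head_cons, he0, he1, he2, he3, ← hLdef, ← hmdef, hz02, hz03]
  norm_num
  ring_nf at h0 h1 h2 h3 hmz hrest hcs hLd heq ⊢
  linarith [h0, h1, h2, h3, hmz, hrest, hcs, hLd, heq]
end Stmt13
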